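/- Let T be the 6-dimensional algebra over ℂ with basis e1,...,e6 and anticommutative multiplication determined by e1e2 = e3, e1e3 = e4, e1e4 = e5, e2e3 = e5, e2e4 = e6 (all other products of basis elements zero). Then T is a nilpotent Tortkara algebra which is not a Malcev algebra. -/

import Mathlib

/-- The Jacobian `J(a,b,c) = (ab)c + (bc)a + (ca)b` of a multiplication. -/
def Jac {A : Type*} [Add A] (mul : A → A → A) (a b c : A) : A :=
  mul (mul a b) c + mul (mul b c) a + mul (mul c a) b

/-- A multiplication is Tortkara if it is anticommutative and satisfies
`(ab)(cb) = J(a,b,c)b`. -/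
def IsTortkara {A : Type*} [AddCommGroup A] (mul : A → A → A) : Prop :=
  (∀ x y, mul x y = - mul y x) ∧
  ∀ a b c, mul (mul a b) (mul c b) = mul (Jac mul a b c) b

/-- `IsProdOfLen mul n a` : `a` is a product (in some arrangement) of `n` elements. -/
inductive IsProdOfLen {A : Type*} (mul : A → A → A) : ℕ → A → Prop
  | single (a : A) : IsProdOfLen mul 1 a
  | mul {m n : ℕ} {a b : A} : IsProdOfLen mul m a → IsProdOfLen mul n b →
      IsProdOfLen mul (m + n) (mul a b)

/-- An algebra is nilpotent if all sufficiently long products vanish. -/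
def IsNilpotentAlg {A : Type*} [Zero A] (mul : A → A → A) : Prop :=
  ∃ N : ℕ, ∀ (n : ℕ) (x : A), N ≤ n → IsProdOfLen mul n x → x = 0

/-- The 6-dimensional algebra `T⁶₀₁` with `e₁e₂=e₃, e₁e₃=e₄, e₁e₄=e₅,
e₂e₃=e₅, e₂e₄=e₆` (anticommutative, other products zero). -/
def mulT601 (x y : Fin 6 → ℂ) : Fin 6 → ℂ :=
  ![0, 0, x 0 * y 1 - x 1 * y 0, x 0 * y 2 - x 2 * y 0,
    (x 0 * y 3 - x 3 * y 0) + (x 1 * y 2 - x 2 * y 1), x 1 * y 3 - x 3 * y 1]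

lemma vec_five {α : Type*} (a b c d e f : α) : ![a,b,c,d,e,f] 5 = f := rfl

lemma prodLen_pos {A : Type*} {mul : A → A → A} {n : ℕ} {a : A}
    (h : IsProdOfLen mul n a) : 1 ≤ n := by
  induction h with
  | single a => omega
  | mul _ _ ih ih' => omega

lemma prod_vanish {n : ℕ} {x : Fin 6 → ℂ} (h : IsProdOfLen mulT601 n x) :
    (2 ≤ n → x 0 = 0 ∧ x 1 = 0) ∧ (3 ≤ n → x 2 = 0) ∧ (4 ≤ n → x 3 = 0) ∧
    (5 ≤ n → x = 0) := by
  induction h with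
  | single a => refine ⟨by omega, by omega, by omega, by omega⟩
  | @mul m n a b hma hnb iha ihb =>
    obtain ⟨ha2, ha3, ha4, _⟩ := iha
    obtain ⟨hb2, hb3, hb4, _⟩ := ihb
    have h1m : 1 ≤ m := prodLen_pos hma
    have h1n : 1 ≤ n := prodLen_pos hnb
    refine ⟨fun _ => ⟨rfl, rfl⟩, ?_, ?_, ?_⟩
    · intro h
      show a 0 * b 1 - a 1 * b 0 = 0
      rcases (by omega : 2 ≤ m ∨ 2 ≤ n) with h | h
      · obtain ⟨h0, h1⟩ := ha2 h; rw [h0, h1]; ring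
      · obtain ⟨h0, h1⟩ := hb2 h; rw [h0, h1]; ring
    · intro h
      show a 0 * b 2 - a 2 * b 0 = 0
      rcases (by omega : 3 ≤ m ∨ 3 ≤ n ∨ (2 ≤ m ∧ 2 ≤ n)) with h | h | ⟨h1, h2⟩
      · rw [ha3 h, (ha2 (by omega)).1]; ring
      · rw [hb3 h, (hb2 (by omega)).1]; ring
      · rw [(ha2 h1).1, (hb2 h2).1]; ring
    · intro h
      funext i
      have key : (4 ≤ m) ∨ (4 ≤ n) ∨ (2 ≤ m ∧ 3 ≤ n) ∨ (3 ≤ m ∧ 2 ≤ n) := by omega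
      fin_cases i
      · rfl
      · rfl
      · show a 0 * b 1 - a 1 * b 0 = 0
        rcases key with h | h | ⟨h1, h2⟩ | ⟨h1, h2⟩
        · obtain ⟨h0, h1⟩ := ha2 (by omega); rw [h0, h1]; ring
        · obtain ⟨h0, h1⟩ := hb2 (by omega); rw [h0, h1]; ring
        · obtain ⟨h0, h1⟩ := ha2 h1; rw [h0, h1]; ring
        · obtain ⟨h0, h1⟩ := hb2 h2; rw [h0, h1]; ring
      · show a 0 * b 2 - a 2 * b 0 = 0
        rcases key with h | h | ⟨h1, h2⟩ | ⟨h1, h2⟩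
        · rw [(ha2 (by omega)).1, ha3 (by omega)]; ring
        · rw [(hb2 (by omega)).1, hb3 (by omega)]; ring
        · rw [(ha2 h1).1, hb3 h2, (hb2 (by omega)).1]; ring
        · rw [ha3 h1, (hb2 h2).1, (ha2 (by omega)).1]; ring
      · show (a 0 * b 3 - a 3 * b 0) + (a 1 * b 2 - a 2 * b 1) = 0
        rcases key with h | h | ⟨h1, h2⟩ | ⟨h1, h2⟩
        · obtain ⟨h0, h1⟩ := ha2 (by omega)
          rw [h0, h1, ha3 (by omega), ha4 h]; ring
        · obtain ⟨h0, h1⟩ := hb2 (by omega)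
          rw [h0, h1, hb3 (by omega), hb4 h]; ring
        · obtain ⟨h0, h1⟩ := ha2 h1
          obtain ⟨k0, k1⟩ := hb2 (by omega)
          rw [h0, h1, k0, k1]; ring
        · obtain ⟨h0, h1⟩ := ha2 (by omega)
          obtain ⟨k0, k1⟩ := hb2 h2
          rw [h0, h1, k0, k1]; ring
      · show a 1 * b 3 - a 3 * b 1 = 0
        rcases key with h | h | ⟨h1, h2⟩ | ⟨h1, h2⟩
        · rw [(ha2 (by omega)).2, ha4 h]; ring
        · rw [(hb2 (by omega)).2, hb4 h]; ring
        · rw [(ha2 h1).2, (hb2 (by omega)).2]; ring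
        · rw [(ha2 (by omega)).2, (hb2 h2).2]; ring

set_option maxHeartbeats 1000000 in
/-- `T⁶₀₁` is a nilpotent Tortkara algebra which is not a Malcev algebra. -/
theorem T601_tortkara_nilpotent_not_malcev :
    IsTortkara mulT601 ∧ IsNilpotentAlg mulT601 ∧
    ∃ w x y z : Fin 6 → ℂ,
      mulT601 (mulT601 w y) (mulT601 x z) ≠
        mulT601 (mulT601 (mulT601 w x) y) z + mulT601 (mulT601 (mulT601 x y) z) w +
          mulT601 (mulT601 (mulT601 y z) w) x + mulT601 (mulT601 (mulT601 z w) x) y := by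
  refine ⟨⟨?_, ?_⟩, ?_, ?_⟩
  · intro x y
    funext i
    fin_cases i <;> simp [mulT601, vec_five] <;> ring
  · intro a b c
    funext i
    fin_cases i <;>
      simp only [mulT601, Jac, Pi.add_apply, Matrix.cons_val_zero, Matrix.cons_val_one,
        Matrix.head_cons, Matrix.cons_val_two, Matrix.tail_cons, Matrix.cons_val_three,
        Matrix.cons_val_four, vec_five, Fin.isValue] <;>
      ring
  · exact ⟨5, fun n x hn hx => (prod_vanish hx).2.2.2 hn⟩
  · refine ⟨![1,0,0,0,0,0], ![1,0,0,0,0,0], ![0,1,0,0,0,0], ![0,1,0,0,0,0],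
      Function.ne_iff.mpr ⟨5, ?_⟩⟩
    norm_num [mulT601, vec_five, Matrix.cons_val_two, Matrix.cons_val_three, Matrix.tail_cons,
      Matrix.head_cons]
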